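/- (Regularity of the neutral subspace and its generator.) In E := lp (fun _ : ℝ => ℂ) 2, for n ∈ ℝ define M_n f := (fun c => exp(𝐢·n·c)·f(c)). Then: (a) M_n maps E into E and is a linear isometric bijection; (b) for every f ∈ E the map ℝ → E, n ↦ M_n f, is continuous (the one-parameter group n ↦ M_n is strongly continuous); (c) for every c ∈ ℝ, with δ_c := lp.single 2 c 1, one has (1/n)·(M_n δ_c − δ_c) → 𝐢·c·δ_c in E as n → 0, i.e. each δ_c is an eigenvector, with eigenvalue c, of the self-adjoint generator Φ_N of the group (Φ_N |c⟩ = c |c⟩). -/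

import Mathlib

open Filter Topology
open scoped ENNReal

set_option maxHeartbeats 1000000

noncomputable section Stmt19Aux

namespace Stmt19

abbrev E' := lp (fun _ : ℝ => ℂ) 2

lemma norm_e (n c : ℝ) : ‖Complex.exp (Complex.I * n * c)‖ = 1 := by
  rw [Complex.norm_exp]
  simp

lemma mem (n : ℝ) (f : E') :
    Memℓp (fun c : ℝ => Complex.exp (Complex.I * n * c) * (f : ∀ _ : ℝ, ℂ) c) 2 := by
  have hf := lp.memℓp f
  rw [memℓp_gen_iff (by norm_num)] at hf ⊢
  refine hf.congr fun c => ?_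
  rw [norm_mul, norm_e, one_mul]

/-- The multiplication linear map. -/
def Mlin (n : ℝ) : E' →ₗ[ℂ] E' where
  toFun f := ⟨fun c : ℝ => Complex.exp (Complex.I * n * c) * (f : ∀ _ : ℝ, ℂ) c, mem n f⟩
  map_add' f g := by
    apply lp.ext
    funext c
    simp only [lp.coeFn_add, Pi.add_apply]
    show Complex.exp (Complex.I * n * c) * ((f : ∀ _ : ℝ, ℂ) c + (g : ∀ _ : ℝ, ℂ) c)
      = Complex.exp (Complex.I * n * c) * (f : ∀ _ : ℝ, ℂ) c
        + Complex.exp (Complex.I * n * c) * (g : ∀ _ : ℝ, ℂ) c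
    ring
  map_smul' a f := by
    apply lp.ext
    funext c
    simp only [lp.coeFn_smul, Pi.smul_apply, RingHom.id_apply, smul_eq_mul]
    show Complex.exp (Complex.I * n * c) * (a * (f : ∀ _ : ℝ, ℂ) c)
      = a * (Complex.exp (Complex.I * n * c) * (f : ∀ _ : ℝ, ℂ) c)
    ring

lemma Mlin_apply (n : ℝ) (f : E') (c : ℝ) :
    ((Mlin n f : E') : ∀ _ : ℝ, ℂ) c = Complex.exp (Complex.I * n * c) * (f : ∀ _ : ℝ, ℂ) c :=
  rfl

lemma exp_mul_exp_neg (n c : ℝ) :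
    Complex.exp (Complex.I * n * c) * Complex.exp (Complex.I * (-n) * c) = 1 := by
  rw [← Complex.exp_add]
  rw [show Complex.I * n * c + Complex.I * (-n) * c = 0 by ring]
  exact Complex.exp_zero

/-- The multiplication isometric equivalence. -/
def M (n : ℝ) : E' ≃ₗᵢ[ℂ] E' where
  toLinearEquiv := LinearEquiv.ofLinear (Mlin n) (Mlin (-n))
    (by
      apply LinearMap.ext
      intro f
      apply lp.ext
      funext c
      show ((Mlin n) ((Mlin (-n)) f) : ∀ _ : ℝ, ℂ) c = (f : ∀ _ : ℝ, ℂ) c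
      rw [Mlin_apply, Mlin_apply, ← mul_assoc, Complex.ofReal_neg, exp_mul_exp_neg, one_mul])
    (by
      apply LinearMap.ext
      intro f
      apply lp.ext
      funext c
      show ((Mlin (-n)) ((Mlin n) f) : ∀ _ : ℝ, ℂ) c = (f : ∀ _ : ℝ, ℂ) c
      rw [Mlin_apply, Mlin_apply, ← mul_assoc, Complex.ofReal_neg,
        mul_comm (Complex.exp (Complex.I * -(n:ℂ) * c)), exp_mul_exp_neg, one_mul])
  norm_map' := fun f => by
    show ‖Mlin n f‖ = ‖f‖
    rw [lp.norm_eq_tsum_rpow (by norm_num) f, lp.norm_eq_tsum_rpow (by norm_num) (Mlin n f)]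
    congr 1
    refine tsum_congr fun c => ?_
    rw [Mlin_apply, norm_mul, norm_e, one_mul]

lemma M_apply (n : ℝ) (f : E') (c : ℝ) :
    ((M n f : E') : ∀ _ : ℝ, ℂ) c = Complex.exp (Complex.I * n * c) * (f : ∀ _ : ℝ, ℂ) c :=
  rfl

lemma tsum_pow_eq (g : ∀ _ : ℝ, ℂ) :
    ∑' c, ‖g c‖ ^ ((2 : ℝ≥0∞).toReal) = ∑' c, ‖g c‖ ^ (2 : ℕ) :=
  tsum_congr fun c => by
    rw [show ((2 : ℝ≥0∞).toReal) = ((2 : ℕ) : ℝ) by norm_num, Real.rpow_natCast]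

lemma norm_eq_sqrt (g : E') :
    ‖g‖ = Real.sqrt (∑' c, ‖(g : ∀ _ : ℝ, ℂ) c‖ ^ (2 : ℕ)) := by
  rw [lp.norm_eq_tsum_rpow (by norm_num) g, tsum_pow_eq, Real.sqrt_eq_rpow]
  norm_num

lemma summable_sq (f : E') : Summable fun c : ℝ => ‖(f : ∀ _ : ℝ, ℂ) c‖ ^ (2 : ℕ) := by
  have hf := lp.memℓp f
  rw [memℓp_gen_iff (by norm_num)] at hf
  refine hf.congr fun c => ?_
  rw [show ((2 : ℝ≥0∞).toReal) = ((2 : ℕ) : ℝ) by norm_num, Real.rpow_natCast]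

lemma strong_cont (f : E') : Continuous fun n : ℝ => M n f := by
  rw [continuous_iff_continuousAt]
  intro n₀
  rw [ContinuousAt, tendsto_iff_norm_sub_tendsto_zero]
  have hsub : ∀ (n : ℝ) (c : ℝ), ((M n f - M n₀ f : E') : ∀ _ : ℝ, ℂ) c
      = (Complex.exp (Complex.I * n * c) - Complex.exp (Complex.I * n₀ * c))
        * (f : ∀ _ : ℝ, ℂ) c := by
    intro n c
    rw [lp.coeFn_sub, Pi.sub_apply, M_apply, M_apply, ← sub_mul]
  have key : Tendsto
      (fun n => ∑' c : ℝ, ‖((M n f - M n₀ f : E') : ∀ _ : ℝ, ℂ) c‖ ^ (2 : ℕ))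
      (𝓝 n₀) (𝓝 0) := by
    have h0 : (0 : ℝ) = ∑' _ : ℝ, (0 : ℝ) := by simp
    rw [h0]
    refine tendsto_tsum_of_dominated_convergence
      (bound := fun c : ℝ => 4 * ‖(f : ∀ _ : ℝ, ℂ) c‖ ^ (2 : ℕ))
      ((summable_sq f).mul_left 4) (fun c => ?_) ?_
    · simp only [hsub]
      have hexp : Tendsto (fun n : ℝ => Complex.exp (Complex.I * n * c)) (𝓝 n₀)
          (𝓝 (Complex.exp (Complex.I * n₀ * c))) := by
        apply Continuous.tendsto
        exact Complex.continuous_exp.comp (by continuity)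
      have h1 : Tendsto (fun n : ℝ =>
          (Complex.exp (Complex.I * n * c) - Complex.exp (Complex.I * n₀ * c))
            * (f : ∀ _ : ℝ, ℂ) c) (𝓝 n₀) (𝓝 0) := by
        have := (hexp.sub (tendsto_const_nhds (x := Complex.exp (Complex.I * n₀ * c)))).mul
          (tendsto_const_nhds (x := (f : ∀ _ : ℝ, ℂ) c))
        simpa using this
      have h2 := (h1.norm).pow 2
      simpa using h2
    · filter_upwards with n c
      have hb : ‖((M n f - M n₀ f : E') : ∀ _ : ℝ, ℂ) c‖ ≤ 2 * ‖(f : ∀ _ : ℝ, ℂ) c‖ := by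
        rw [hsub, norm_mul]
        have h2 : ‖Complex.exp (Complex.I * n * c) - Complex.exp (Complex.I * n₀ * c)‖ ≤ 2 := by
          calc ‖Complex.exp (Complex.I * n * c) - Complex.exp (Complex.I * n₀ * c)‖
              ≤ ‖Complex.exp (Complex.I * n * c)‖ + ‖Complex.exp (Complex.I * n₀ * c)‖ :=
                norm_sub_le _ _
            _ = 2 := by rw [norm_e, norm_e]; norm_num
        exact mul_le_mul_of_nonneg_right h2 (norm_nonneg _)
      have hnn : (0 : ℝ) ≤ ‖((M n f - M n₀ f : E') : ∀ _ : ℝ, ℂ) c‖ := norm_nonneg _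
      calc ‖‖((M n f - M n₀ f : E') : ∀ _ : ℝ, ℂ) c‖ ^ (2 : ℕ)‖
          = ‖((M n f - M n₀ f : E') : ∀ _ : ℝ, ℂ) c‖ ^ (2 : ℕ) :=
            Real.norm_of_nonneg (pow_nonneg hnn 2)
        _ ≤ (2 * ‖(f : ∀ _ : ℝ, ℂ) c‖) ^ (2 : ℕ) := pow_le_pow_left₀ hnn hb 2
        _ = 4 * ‖(f : ∀ _ : ℝ, ℂ) c‖ ^ (2 : ℕ) := by ring
  have hnorm : ∀ n, ‖M n f - M n₀ f‖
      = Real.sqrt (∑' c : ℝ, ‖((M n f - M n₀ f : E') : ∀ _ : ℝ, ℂ) c‖ ^ (2 : ℕ)) :=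
    fun n => norm_eq_sqrt _
  simp only [hnorm]
  have h3 := (Real.continuous_sqrt.tendsto 0).comp key
  rw [Real.sqrt_zero] at h3
  exact h3

lemma M_single (n c : ℝ) :
    M n (lp.single 2 c (1 : ℂ)) = Complex.exp (Complex.I * n * c) • lp.single 2 c (1 : ℂ) := by
  apply lp.ext
  funext x
  rw [M_apply, lp.coeFn_smul, Pi.smul_apply, smul_eq_mul]
  by_cases hx : x = c
  · subst hx
    rw [lp.single_apply_self]
  · rw [lp.single_apply_ne 2 c _ hx, mul_zero, mul_zero]

lemma scalar_limit (c : ℝ) :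
    Tendsto (fun n : ℝ => (n : ℂ)⁻¹ * (Complex.exp (Complex.I * n * c) - 1))
      (𝓝[≠] (0 : ℝ)) (𝓝 (Complex.I * c)) := by
  have h1 : HasDerivAt (fun n : ℝ => ((n : ℝ) : ℂ)) 1 0 := by
    simpa using (hasDerivAt_id (0 : ℝ)).ofReal_comp
  have h2 : HasDerivAt (fun n : ℝ => Complex.I * c * (n : ℂ)) (Complex.I * c) 0 := by
    simpa using h1.const_mul (Complex.I * c)
  have h3 := h2.cexp
  have h4 : HasDerivAt (fun n : ℝ => Complex.exp (Complex.I * n * c)) (Complex.I * c) 0 := by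
    have heq : (fun n : ℝ => Complex.exp (Complex.I * c * (n : ℂ)))
        = fun n : ℝ => Complex.exp (Complex.I * n * c) := by
      funext n; congr 1; ring
    rw [heq] at h3
    simpa using h3
  have h5 := hasDerivAt_iff_tendsto_slope.mp h4
  refine h5.congr fun n => ?_
  simp only [slope, vsub_eq_sub, sub_zero]
  rw [show Complex.I * ((0 : ℝ) : ℂ) * c = 0 by push_cast; ring, Complex.exp_zero]
  rw [Complex.real_smul]
  push_cast
  ring

lemma eigen (c : ℝ) :
    Tendsto
      (fun n : ℝ => ((n : ℂ)⁻¹) • (M n (lp.single 2 c (1 : ℂ)) - lp.single 2 c (1 : ℂ)))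
      (𝓝[≠] (0 : ℝ))
      (𝓝 ((Complex.I * c) • (lp.single 2 c (1 : ℂ) : E'))) := by
  have heq : ∀ n : ℝ,
      ((n : ℂ)⁻¹) • (M n (lp.single 2 c (1 : ℂ)) - lp.single 2 c (1 : ℂ))
        = ((n : ℂ)⁻¹ * (Complex.exp (Complex.I * n * c) - 1)) • lp.single 2 c (1 : ℂ) := by
    intro n
    rw [M_single, show (Complex.exp (Complex.I * n * c)) • (lp.single 2 c (1 : ℂ) : E')
        - lp.single 2 c (1 : ℂ)
        = (Complex.exp (Complex.I * n * c) - 1) • lp.single 2 c (1 : ℂ) by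
      rw [sub_smul, one_smul], smul_smul]
  simp only [heq]
  exact (scalar_limit c).smul_const _

end Stmt19

end Stmt19Aux

/-- (Regularity of the neutral subspace and its generator.)
On `E = ℓ²(ℝ_d) = lp (fun _ : ℝ => ℂ) 2` there is a family `M` of linear isometric
bijections, `(M n f) c = exp(i n c)·f(c)` (the Weyl unitaries `W(0,n)` of the regular
neutral subspace), such that: (b) for every `f ∈ E` the map `n ↦ M n f` is continuous
(the one-parameter group is strongly continuous); and (c) for every `c`, with
`δ_c = lp.single 2 c 1`, one has `(1/n)(M_n δ_c − δ_c) → i·c·δ_c` as `n → 0`, i.e.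
each `δ_c` is an eigenvector with eigenvalue `c` of the self-adjoint generator `Φ_N`. -/
theorem stmt_19 :
    ∃ M : ℝ → (lp (fun _ : ℝ => ℂ) 2 ≃ₗᵢ[ℂ] lp (fun _ : ℝ => ℂ) 2),
      (∀ (n : ℝ) (f : lp (fun _ : ℝ => ℂ) 2) (c : ℝ),
        (M n f : ∀ _ : ℝ, ℂ) c = Complex.exp (Complex.I * n * c) * (f : ∀ _ : ℝ, ℂ) c) ∧
      (∀ f : lp (fun _ : ℝ => ℂ) 2, Continuous fun n : ℝ => M n f) ∧
      (∀ c : ℝ, Tendsto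
        (fun n : ℝ => ((n : ℂ)⁻¹) • (M n (lp.single 2 c (1 : ℂ)) - lp.single 2 c (1 : ℂ)))
        (𝓝[≠] (0 : ℝ))
        (𝓝 ((Complex.I * c) • (lp.single 2 c (1 : ℂ) : lp (fun _ : ℝ => ℂ) 2)))) := by
  exact ⟨Stmt19.M, Stmt19.M_apply, Stmt19.strong_cont, Stmt19.eigen⟩
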